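/- Let x, y ∈ {0,1}^n with f_m(x) ≠ f_m(y) for some m ∈ {1,2}, and let b be minimal such that f_m^B(x_{B_b}) ≠ f_m^B(y_{B_b}). Then for every m' ∈ {1,2}: f_{m'}(x) < f_{m'}(y) if and only if f_{m'}^B(x_{B_b}) < f_{m'}^B(y_{B_b}), and f_{m'}(x) > f_{m'}(y) if and only if f_{m'}^B(x_{B_b}) > f_{m'}^B(y_{B_b}). -/
import Mathlib


/-- Number of leading positions on which `x` agrees with the target string `z`. -/
def LO (ℓ : ℕ) (z x : Fin ℓ → Bool) : ℕ :=
  (Finset.univ.filter (fun i : Fin ℓ => ∀ j ≤ i, x j = z j)).card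

/-- The all-ones target string `z¹ = 1^ℓ`. -/
def zOne (ℓ : ℕ) : Fin ℓ → Bool := fun _ => true

/-- The target string `z² = 1^{ℓ-r} 0^r`. -/
def zTwo (ℓ r : ℕ) : Fin ℓ → Bool := fun i => decide (i.val < ℓ - r)

/-- The first base function `f₁^B(w) = (ℓ+1)·LO_{z¹}(w) + LO_{z²}(w)`. -/
def f1B (ℓ r : ℕ) (w : Fin ℓ → Bool) : ℕ :=
  (ℓ + 1) * LO ℓ (zOne ℓ) w + LO ℓ (zTwo ℓ r) w

/-- The second base function `f₂^B(w) = (ℓ+1)·LO_{z²}(w) + LO_{z¹}(w)`. -/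
def f2B (ℓ r : ℕ) (w : Fin ℓ → Bool) : ℕ :=
  (ℓ + 1) * LO ℓ (zTwo ℓ r) w + LO ℓ (zOne ℓ) w

/-- The base functions indexed by `m : Fin 2` (`0` for `f₁^B`, `1` for `f₂^B`). -/
def fB (ℓ r : ℕ) (m : Fin 2) : (Fin ℓ → Bool) → ℕ :=
  if m = 0 then f1B ℓ r else f2B ℓ r

/-- The `b`-th block (0-based) of a bitstring of length `n = k·ℓ`. -/
def blockOf (k ℓ : ℕ) (x : Fin (k * ℓ) → Bool) (b : Fin k) : Fin ℓ → Bool :=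
  fun j => x ⟨b.val * ℓ + j.val, by
    calc b.val * ℓ + j.val < b.val * ℓ + ℓ := Nat.add_lt_add_left j.isLt _
      _ = (b.val + 1) * ℓ := by ring
      _ ≤ k * ℓ := Nat.mul_le_mul_right ℓ b.isLt⟩

/-- The full objective `f_m(x) = Σ_b (ℓ+1)^{2(k-b)} f_m^B(x_{B_b})` (with 0-based
block index `b`, so the paper's exponent `2(k-b)` becomes `2(k-1-b)`). -/
def fObj (k ℓ r : ℕ) (m : Fin 2) (x : Fin (k * ℓ) → Bool) : ℕ :=
  ∑ b : Fin k, (ℓ + 1) ^ (2 * (k - 1 - b.val)) * fB ℓ r m (blockOf k ℓ x b)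


lemma LO_le (ℓ : ℕ) (z x : Fin ℓ → Bool) : LO ℓ z x ≤ ℓ := by
  classical
  calc (Finset.univ.filter (fun i : Fin ℓ => ∀ j ≤ i, x j = z j)).card
      ≤ (Finset.univ : Finset (Fin ℓ)).card := Finset.card_filter_le _ _
    _ = ℓ := by simp

lemma pair_inj {ℓ a a' c c' : ℕ} (hc : c ≤ ℓ) (hc' : c' ≤ ℓ)
    (h : (ℓ+1)*a + c = (ℓ+1)*a' + c') : a = a' ∧ c = c' := by
  have d1 : ((ℓ+1)*a + c)/(ℓ+1) = a := by
    rw [Nat.mul_add_div (by omega)]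
    simp [Nat.div_eq_of_lt (by omega : c < ℓ+1)]
  have d2 : ((ℓ+1)*a' + c')/(ℓ+1) = a' := by
    rw [Nat.mul_add_div (by omega)]
    simp [Nat.div_eq_of_lt (by omega : c' < ℓ+1)]
  have ha : a = a' := by rw [← d1, h, d2]
  subst ha
  exact ⟨rfl, Nat.add_left_cancel h⟩

lemma f1B_eq_iff (ℓ r : ℕ) (u v : Fin ℓ → Bool) :
    f1B ℓ r u = f1B ℓ r v ↔ f2B ℓ r u = f2B ℓ r v := by
  constructor <;> intro h
  · obtain ⟨h1, h2⟩ := pair_inj (LO_le ℓ _ u) (LO_le ℓ _ v) h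
    unfold f2B; rw [h1, h2]
  · obtain ⟨h1, h2⟩ := pair_inj (LO_le ℓ _ u) (LO_le ℓ _ v) h
    unfold f1B; rw [h1, h2]

lemma fB_eq_iff (ℓ r : ℕ) (m m' : Fin 2) (u v : Fin ℓ → Bool) :
    fB ℓ r m u = fB ℓ r m v ↔ fB ℓ r m' u = fB ℓ r m' v := by
  fin_cases m <;> fin_cases m' <;> simp [fB] <;>
    first
      | exact f1B_eq_iff ℓ r u v
      | exact (f1B_eq_iff ℓ r u v).symm

lemma fB_lt (ℓ r : ℕ) (m : Fin 2) (w : Fin ℓ → Bool) : fB ℓ r m w < (ℓ+1)^2 := by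
  have h1 := LO_le ℓ (zOne ℓ) w
  have h2 := LO_le ℓ (zTwo ℓ r) w
  fin_cases m <;> simp [fB, f1B, f2B] <;> nlinarith

lemma geom_aux (M n : ℕ) (hM : 1 ≤ M) :
    (∑ j ∈ Finset.range n, M^j * (M-1)) + 1 = M^n := by
  induction n with
  | zero => simp
  | succ n ih =>
    rw [Finset.sum_range_succ]
    have h1 : M^n * (M-1) = M^(n+1) - M^n := by
      rw [Nat.mul_sub, mul_one, ← pow_succ]
    have h2 : M^n ≤ M^(n+1) := Nat.pow_le_pow_right hM (by omega)
    omega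

lemma tail_lt (M N b : ℕ) (hM : 2 ≤ M) (hb : b < N) (F : ℕ → ℕ)
    (hF : ∀ i, F i < M) :
    ∑ i ∈ Finset.Ico (b+1) N, M^(N-1-i) * F i < M^(N-1-b) := by
  have step1 : ∑ i ∈ Finset.Ico (b+1) N, M^(N-1-i) * F i
      ≤ ∑ i ∈ Finset.Ico (b+1) N, M^(N-1-i) * (M-1) := by
    apply Finset.sum_le_sum
    intro i _
    exact Nat.mul_le_mul_left _ (by have := hF i; omega)
  have step2 : ∑ i ∈ Finset.Ico (b+1) N, M^(N-1-i) * (M-1)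
      = ∑ j ∈ Finset.range (N-1-b), M^(N-1-b-1-j) * (M-1) := by
    rw [Finset.sum_Ico_eq_sum_range]
    apply Finset.sum_congr (by congr 1 <;> omega)
    intro j hj
    simp only [Finset.mem_range] at hj
    congr 2
    omega
  have step3 : ∑ j ∈ Finset.range (N-1-b), M^(N-1-b-1-j) * (M-1)
      = ∑ j ∈ Finset.range (N-1-b), M^j * (M-1) := by
    exact Finset.sum_range_reflect (fun j => M^j * (M-1)) (N-1-b)
  have step4 := geom_aux M (N-1-b) (by omega)
  have step5 : M^(N-1-b) ≥ 1 := Nat.one_le_pow _ _ (by omega)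
  omega

lemma key_lt (M N b : ℕ) (hM : 2 ≤ M) (hb : b < N) (F G : ℕ → ℕ)
    (hF : ∀ i, F i < M) (hG : ∀ i, G i < M)
    (hpre : ∀ c < b, F c = G c) (hlt : F b < G b) :
    ∑ i ∈ Finset.range N, M^(N-1-i) * F i < ∑ i ∈ Finset.range N, M^(N-1-i) * G i := by
  have split : ∀ H : ℕ → ℕ, ∑ i ∈ Finset.range N, M^(N-1-i) * H i
      = (∑ i ∈ Finset.range b, M^(N-1-i) * H i) + M^(N-1-b) * H b
        + ∑ i ∈ Finset.Ico (b+1) N, M^(N-1-i) * H i := by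
    intro H
    rw [Finset.range_eq_Ico, ← Finset.sum_Ico_consecutive _ (Nat.zero_le (b+1)) hb,
      ← Finset.range_eq_Ico, Finset.sum_range_succ]
  rw [split F, split G]
  have hpe : ∑ i ∈ Finset.range b, M^(N-1-i) * F i
      = ∑ i ∈ Finset.range b, M^(N-1-i) * G i := by
    apply Finset.sum_congr rfl
    intro i hi
    simp only [Finset.mem_range] at hi
    rw [hpre i hi]
  have hT := tail_lt M N b hM hb F hF
  have hmul : M^(N-1-b) * (F b + 1) ≤ M^(N-1-b) * G b :=
    Nat.mul_le_mul_left _ (by omega)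
  rw [Nat.mul_add, mul_one] at hmul
  omega

lemma fObj_eq_range (k ℓ r : ℕ) (m : Fin 2) (x : Fin (k * ℓ) → Bool) :
    fObj k ℓ r m x = ∑ i ∈ Finset.range k,
      ((ℓ+1)^2)^(k-1-i) * (if h : i < k then fB ℓ r m (blockOf k ℓ x ⟨i, h⟩) else 0) := by
  rw [fObj, ← Fin.sum_univ_eq_sum_range]
  apply Finset.sum_congr rfl
  intro i _
  rw [dif_pos i.isLt, ← pow_mul, Fin.eta]

theorem stmt_7' (k ℓ r : ℕ) (hk : 0 < k) (hℓ : 0 < ℓ) (hr : r ≤ ℓ)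
    (x y : Fin (k * ℓ) → Bool) (m : Fin 2)
    (hne : fObj k ℓ r m x ≠ fObj k ℓ r m y)
    (b : Fin k)
    (hb : fB ℓ r m (blockOf k ℓ x b) ≠ fB ℓ r m (blockOf k ℓ y b))
    (hbmin : ∀ c : Fin k, c < b → fB ℓ r m (blockOf k ℓ x c) = fB ℓ r m (blockOf k ℓ y c)) :
    ∀ m' : Fin 2,
      (fObj k ℓ r m' x < fObj k ℓ r m' y ↔ fB ℓ r m' (blockOf k ℓ x b) < fB ℓ r m' (blockOf k ℓ y b)) ∧
      (fObj k ℓ r m' x > fObj k ℓ r m' y ↔ fB ℓ r m' (blockOf k ℓ x b) > fB ℓ r m' (blockOf k ℓ y b)) := by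
  intro m'
  set M := (ℓ+1)^2 with hM
  have hM2 : 2 ≤ M := by
    have h2 : 2^2 ≤ (ℓ+1)^2 := Nat.pow_le_pow_left (by omega) 2
    norm_num at h2
    rw [hM]
    omega
  set F : ℕ → ℕ := fun i => if h : i < k then fB ℓ r m' (blockOf k ℓ x ⟨i, h⟩) else 0 with hF
  set G : ℕ → ℕ := fun i => if h : i < k then fB ℓ r m' (blockOf k ℓ y ⟨i, h⟩) else 0 with hG
  have hFlt : ∀ i, F i < M := by
    intro i; simp only [hF]; split
    · exact fB_lt ℓ r m' _
    · omega
  have hGlt : ∀ i, G i < M := by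
    intro i; simp only [hG]; split
    · exact fB_lt ℓ r m' _
    · omega
  have hpre : ∀ c < b.val, F c = G c := by
    intro c hc
    have hck : c < k := lt_trans hc b.isLt
    simp only [hF, hG, dif_pos hck]
    exact (fB_eq_iff ℓ r m m' _ _).mp (hbmin ⟨c, hck⟩ hc)
  have hFb : F b.val = fB ℓ r m' (blockOf k ℓ x b) := by
    simp [hF, dif_pos b.isLt]
  have hGb : G b.val = fB ℓ r m' (blockOf k ℓ y b) := by
    simp [hG, dif_pos b.isLt]
  have hbne : F b.val ≠ G b.val := by
    rw [hFb, hGb]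
    intro hcon
    exact hb ((fB_eq_iff ℓ r m' m _ _).mp hcon)
  have hx : fObj k ℓ r m' x = ∑ i ∈ Finset.range k, M^(k-1-i) * F i :=
    fObj_eq_range k ℓ r m' x
  have hy : fObj k ℓ r m' y = ∑ i ∈ Finset.range k, M^(k-1-i) * G i :=
    fObj_eq_range k ℓ r m' y
  rcases lt_trichotomy (F b.val) (G b.val) with hlt | heq | hgt
  · have := key_lt M k b.val hM2 b.isLt F G hFlt hGlt hpre hlt
    rw [← hx, ← hy] at this
    rw [← hFb, ← hGb]
    omega
  · exact absurd heq hbne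
  · have := key_lt M k b.val hM2 b.isLt G F hGlt hFlt (fun c hc => (hpre c hc).symm) hgt
    rw [← hx, ← hy] at this
    rw [← hFb, ← hGb]
    omega
/-- If `f_m(x) ≠ f_m(y)` and `b` is minimal with
`f_m^B(x_{B_b}) ≠ f_m^B(y_{B_b})`, then for every objective `m'`, the full
function values of `x` and `y` compare exactly like the base function values on
block `b`. -/
theorem stmt_7 (k ℓ r : ℕ) (hk : 0 < k) (hℓ : 0 < ℓ) (hr : r ≤ ℓ)
    (x y : Fin (k * ℓ) → Bool) (m : Fin 2)
    (hne : fObj k ℓ r m x ≠ fObj k ℓ r m y)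
    (b : Fin k)
    (hb : fB ℓ r m (blockOf k ℓ x b) ≠ fB ℓ r m (blockOf k ℓ y b))
    (hbmin : ∀ c : Fin k, c < b → fB ℓ r m (blockOf k ℓ x c) = fB ℓ r m (blockOf k ℓ y c)) :
    ∀ m' : Fin 2,
      (fObj k ℓ r m' x < fObj k ℓ r m' y ↔ fB ℓ r m' (blockOf k ℓ x b) < fB ℓ r m' (blockOf k ℓ y b)) ∧
      (fObj k ℓ r m' x > fObj k ℓ r m' y ↔ fB ℓ r m' (blockOf k ℓ x b) > fB ℓ r m' (blockOf k ℓ y b)) := by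
  exact stmt_7' k ℓ r hk hℓ hr x y m hne b hb hbmin
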